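/- Let C be a right rigid Krull–Schmidt monoidal category, Z ∈ 𝓑 = { X ∈ inde C | C(𝟙,X) ≠ 0 } and X an indecomposable object. If the coevaluation co_X : 𝟙 → X^∨⊗X factors as a composition 𝟙 → Z^{⊕k} → X^∨⊗X for some k ∈ ℤ_{>0}, then X is a direct summand of X⊗Z. -/
import Mathlib


open CategoryTheory CategoryTheory.Limits CategoryTheory.MonoidalCategory

namespace TIP

attribute [local instance] CategoryTheory.Limits.hasBinaryBiproducts_of_finite_biproducts

universe v u v₂ u₂

section DirectSummand

variable {C : Type u} [Category.{v} C]

/-- `X` is a direct summand of `Y` (i.e. `X` is a retract of `Y`). -/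
def IsDirectSummand (X Y : C) : Prop := ∃ (i : X ⟶ Y) (r : Y ⟶ X), i ≫ r = 𝟙 X

end DirectSummand

section Submod

variable {C : Type u} [Category.{v} C] [Preadditive C]

/-- A subfunctor (submodule) of the representable module `P_Z = C(Z, -)`. -/
structure Submod (Z : C) where
  carrier : ∀ X : C, AddSubgroup (Z ⟶ X)
  map_mem : ∀ {X Y : C} (f : X ⟶ Y) {φ : Z ⟶ X}, φ ∈ carrier X → φ ≫ f ∈ carrier Y

theorem Submod.ext' {Z : C} {M N : Submod Z} (h : M.carrier = N.carrier) : M = N := by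
  cases M; cases N; cases h; rfl

instance {Z : C} : PartialOrder (Submod Z) where
  le M N := ∀ X : C, M.carrier X ≤ N.carrier X
  le_refl M X := le_rfl
  le_trans M N P h h' X := (h X).trans (h' X)
  le_antisymm M N h h' := Submod.ext' (funext fun X => le_antisymm (h X) (h' X))

/-- Post-composition with a fixed morphism, as an additive map. -/
def postcompHom (Z : C) {X Y : C} (f : X ⟶ Y) : (Z ⟶ X) →+ (Z ⟶ Y) where
  toFun g := g ≫ f
  map_zero' := Limits.zero_comp
  map_add' a b := Preadditive.add_comp _ _ _ _ _ _

/-- The trace submodule `Tr_S P_Z` of the representable module `P_Z`, for a class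
of objects `S`. -/
def traceSub (Z : C) (S : Set C) : Submod Z where
  carrier Y := AddSubgroup.closure {h : Z ⟶ Y | ∃ W ∈ S, ∃ (b : Z ⟶ W) (a : W ⟶ Y), h = b ≫ a}
  map_mem := by
    intro X Y f φ hφ
    have h1 : postcompHom Z f φ ∈ (AddSubgroup.closure
        {h : Z ⟶ X | ∃ W ∈ S, ∃ (b : Z ⟶ W) (a : W ⟶ X), h = b ≫ a}).map (postcompHom Z f) :=
      AddSubgroup.mem_map_of_mem _ hφ
    rw [AddMonoidHom.map_closure] at h1
    refine AddSubgroup.closure_mono ?_ h1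
    rintro x ⟨h, ⟨W, hW, b, a, rfl⟩, rfl⟩
    exact ⟨W, hW, b, a ≫ f, by simp [postcompHom]⟩

/-- The action of the endomorphism ring `C(X,X)` on `C(Z,X)` by post-composition. -/
instance endSMul {Z X : C} : SMul (End X) (Z ⟶ X) := ⟨fun e φ => φ ≫ e⟩

theorem end_smul_def {Z X : C} (e : End X) (φ : Z ⟶ X) : e • φ = φ ≫ e := rfl

/-- `C(Z,X)` is a left module over the endomorphism ring `C(X,X)`. -/
instance endModule {Z X : C} : Module (End X) (Z ⟶ X) where
  one_smul φ := by simp [end_smul_def, End.one_def]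
  mul_smul e f φ := by simp [end_smul_def, End.mul_def]
  smul_zero e := by simp [end_smul_def]
  smul_add e φ ψ := Preadditive.add_comp _ _ _ _ _ _
  add_smul e f φ := Preadditive.comp_add _ _ _ _ _ _
  zero_smul φ := by simp [end_smul_def]

end Submod

section KS

variable {C : Type u} [Category.{v} C] [Preadditive C] [HasBinaryBiproducts C]

/-- An object of an additive category is indecomposable if it is nonzero and
any decomposition as a biproduct has a zero summand. -/
def Indecomposable (X : C) : Prop :=
  ¬ IsZero X ∧ ∀ Y Z : C, Nonempty (X ≅ Y ⊞ Z) → IsZero Y ∨ IsZero Z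

end KS

section KS2

variable (C : Type u) [Category.{v} C] [Preadditive C] [HasFiniteBiproducts C]

/-- A Krull-Schmidt category: every object is a finite biproduct of indecomposable
objects, and indecomposable objects have local endomorphism rings. -/
structure IsKrullSchmidt : Prop where
  local_end : ∀ X : C, Indecomposable X → IsLocalRing (End X)
  decomp : ∀ X : C, ∃ (n : ℕ) (f : Fin n → C),
    (∀ i, Indecomposable (f i)) ∧ Nonempty (X ≅ ⨁ f)

end KS2

section Monoidal

variable {C : Type u} [Category.{v} C] [MonoidalCategory C]

/-- A right dual `(X^∨, ev_X, co_X)` of an object `X`, with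
`ev_X : X ⊗ X^∨ ⟶ 𝟙` and `co_X : 𝟙 ⟶ X^∨ ⊗ X` satisfying the zigzag identities. -/
structure RightDual (X : C) where
  dual : C
  ev : X ⊗ dual ⟶ 𝟙_ C
  coev : 𝟙_ C ⟶ dual ⊗ X
  zigzag₁ : (ρ_ X).inv ≫ (X ◁ coev) ≫ (α_ X dual X).inv ≫ (ev ▷ X) ≫ (λ_ X).hom = 𝟙 X
  zigzag₂ : (λ_ dual).inv ≫ (coev ▷ dual) ≫ (α_ dual X dual).hom ≫ (dual ◁ ev) ≫ (ρ_ dual).hom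
      = 𝟙 dual

/-- The map `ι_{XY} : C(𝟙, X^∨ ⊗ Y) → C(X, Y)`, `φ ↦ (ev_X ⊗ 1_Y) ∘ (1_X ⊗ φ)`,
defined in terms of the raw data of a dual object and an evaluation morphism. -/
def iotaRaw {X : C} (Xd : C) (ev : X ⊗ Xd ⟶ 𝟙_ C) {Y : C} (φ : 𝟙_ C ⟶ Xd ⊗ Y) : X ⟶ Y :=
  (ρ_ X).inv ≫ (X ◁ φ) ≫ (α_ X Xd Y).inv ≫ (ev ▷ Y) ≫ (λ_ Y).hom

/-- The isomorphism `ι_{XY} : C(𝟙, X^∨ ⊗ Y) → C(X, Y)`, `φ ↦ (ev_X ⊗ 1_Y) ∘ (1_X ⊗ φ)`. -/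
def iota {X : C} (D : RightDual X) {Y : C} (φ : 𝟙_ C ⟶ D.dual ⊗ Y) : X ⟶ Y :=
  iotaRaw D.dual D.ev φ

/-- The inverse of `ι_{XY}`, given by `f ↦ (1_{X^∨} ⊗ f) ∘ co_X`. -/
def iotaInv {X : C} (D : RightDual X) {Y : C} (f : X ⟶ Y) : 𝟙_ C ⟶ D.dual ⊗ Y :=
  D.coev ≫ (D.dual ◁ f)

end Monoidal

section TId

variable (C : Type u) [Category.{v} C] [Preadditive C] [MonoidalCategory C]

/-- A left-tensor ideal in a preadditive monoidal category. -/
structure TensorIdeal where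
  carrier : ∀ X Y : C, AddSubgroup (X ⟶ Y)
  comp_pre : ∀ {W X Y : C} (g : W ⟶ X) {f : X ⟶ Y}, f ∈ carrier X Y → g ≫ f ∈ carrier W Y
  comp_post : ∀ {X Y Z : C} {f : X ⟶ Y} (h : Y ⟶ Z), f ∈ carrier X Y → f ≫ h ∈ carrier X Z
  whisker_mem : ∀ (Z : C) {X Y : C} {f : X ⟶ Y}, f ∈ carrier X Y →
    Z ◁ f ∈ carrier (Z ⊗ X) (Z ⊗ Y)

variable {C}

theorem TensorIdeal.ext' {J K : TensorIdeal C} (h : J.carrier = K.carrier) : J = K := by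
  cases J; cases K; cases h; rfl

instance : PartialOrder (TensorIdeal C) where
  le J K := ∀ X Y : C, J.carrier X Y ≤ K.carrier X Y
  le_refl J X Y := le_rfl
  le_trans J K L h h' X Y := (h X Y).trans (h' X Y)
  le_antisymm J K h h' :=
    TensorIdeal.ext' (funext fun X => funext fun Y => le_antisymm (h X Y) (h' X Y))

variable (C)

/-- The tensor ideal of all morphisms. -/
def TensorIdeal.top : TensorIdeal C where
  carrier _ _ := ⊤
  comp_pre := by intros; exact AddSubgroup.mem_top _
  comp_post := by intros; exact AddSubgroup.mem_top _
  whisker_mem := by intros; exact AddSubgroup.mem_top _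

variable {C}

/-- `Ψ` maps a tensor ideal `J` to the subfunctor `J(𝟙, -)` of the principal module
`P_𝟙 = C(𝟙, -)`. -/
def Psi (J : TensorIdeal C) : Submod (𝟙_ C) where
  carrier X := J.carrier (𝟙_ C) X
  map_mem := by intro X Y f φ hφ; exact J.comp_post f hφ

variable (C) [MonoidalPreadditive C]

/-- The zero tensor ideal. -/
def TensorIdeal.bot : TensorIdeal C where
  carrier _ _ := ⊥
  comp_pre := by
    intro W X Y g f hf
    rw [AddSubgroup.mem_bot] at *
    rw [hf, Limits.comp_zero]
  comp_post := by
    intro X Y Z f h hf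
    rw [AddSubgroup.mem_bot] at *
    rw [hf, Limits.zero_comp]
  whisker_mem := by
    intro Z X Y f hf
    rw [AddSubgroup.mem_bot] at *
    rw [hf, MonoidalPreadditive.whiskerLeft_zero]

end TId

section Thick

variable (C : Type u) [Category.{v} C] [Preadditive C] [MonoidalCategory C]
  [HasBinaryBiproducts C]

/-- A thick left-tensor Ob-ideal: an isomorphism closed class of objects, closed under
direct sums, direct summands, and tensoring on the left by arbitrary objects. -/
structure ThickIdeal where
  carrier : Set C
  iso_mem : ∀ {X Y : C}, (X ≅ Y) → X ∈ carrier → Y ∈ carrier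
  biprod_mem_iff : ∀ X Y : C, ((X ⊞ Y) ∈ carrier ↔ (X ∈ carrier ∧ Y ∈ carrier))
  tensor_mem : ∀ (Y : C) {X : C}, X ∈ carrier → (Y ⊗ X) ∈ carrier

variable {C}

theorem ThickIdeal.ext' {I I' : ThickIdeal C} (h : I.carrier = I'.carrier) : I = I' := by
  cases I; cases I'; cases h; rfl

instance : PartialOrder (ThickIdeal C) where
  le I I' := I.carrier ⊆ I'.carrier
  le_refl I := Set.Subset.refl _
  le_trans I I' I'' h h' := Set.Subset.trans h h'
  le_antisymm I I' h h' := ThickIdeal.ext' (le_antisymm h h')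

/-- The decategorification map `Ob`, sending a tensor ideal `J` to the thick
left-tensor Ob-ideal of objects `X` with `1_X ∈ J(X,X)`. -/
def obIdeal (J : TensorIdeal C) : ThickIdeal C where
  carrier := {X : C | 𝟙 X ∈ J.carrier X X}
  iso_mem := by
    intro X Y e hX
    have h := J.comp_pre e.inv (J.comp_post e.hom hX)
    simpa using h
  biprod_mem_iff := by
    intro X Y
    constructor
    · intro h
      constructor
      · have h1 := J.comp_pre (biprod.inl : X ⟶ X ⊞ Y) (J.comp_post (biprod.fst : X ⊞ Y ⟶ X) h)
        simpa using h1
      · have h1 := J.comp_pre (biprod.inr : Y ⟶ X ⊞ Y) (J.comp_post (biprod.snd : X ⊞ Y ⟶ Y) h)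
        simpa using h1
    · rintro ⟨hX, hY⟩
      have h1 := J.comp_pre (biprod.fst : X ⊞ Y ⟶ X) (J.comp_post (biprod.inl : X ⟶ X ⊞ Y) hX)
      have h2 := J.comp_pre (biprod.snd : X ⊞ Y ⟶ Y) (J.comp_post (biprod.inr : Y ⟶ X ⊞ Y) hY)
      simp only [Category.id_comp] at h1 h2
      have h3 := AddSubgroup.add_mem _ h1 h2
      rw [biprod.total] at h3
      exact h3
  tensor_mem := by
    intro Y X hX
    have h := J.whisker_mem Y hX
    simpa using h

end Thick

section Braided

variable {C : Type u} [Category.{v} C] [MonoidalCategory C] [BraidedCategory C]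

/-- The trace of an endomorphism, with respect to a choice of right duals. -/
def traceMor (D : ∀ X : C, RightDual X) {X : C} (f : X ⟶ X) : 𝟙_ C ⟶ 𝟙_ C :=
  (D X).coev ≫ ((D X).dual ◁ f) ≫ (β_ (D X).dual X).hom ≫ (D X).ev

end Braided


section Aux

theorem isUnit_or_isUnit_of_isUnit_add' {R : Type*} [Ring R] [IsLocalRing R] {a b : R}
    (h : IsUnit (a + b)) : IsUnit a ∨ IsUnit b := by
  rcases h with ⟨u, hu⟩
  have h1 : (↑u⁻¹ * a) + (↑u⁻¹ * b) = 1 := by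
    rw [← mul_add, ← hu, u.inv_mul]
  rcases IsLocalRing.isUnit_or_isUnit_of_add_one h1 with h2 | h2
  · left
    have h3 := u.isUnit.mul h2
    rwa [← mul_assoc, u.mul_inv, one_mul] at h3
  · right
    have h3 := u.isUnit.mul h2
    rwa [← mul_assoc, u.mul_inv, one_mul] at h3

theorem exists_isUnit_of_isUnit_sum {R : Type*} [Ring R] [IsLocalRing R] {ι : Type*}
    (s : Finset ι) (e : ι → R) (h : IsUnit (∑ i ∈ s, e i)) : ∃ i ∈ s, IsUnit (e i) := by
  classical
  induction s using Finset.induction_on with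
  | empty =>
    rw [Finset.sum_empty] at h
    exact absurd h not_isUnit_zero
  | @insert a s ha ih =>
    rw [Finset.sum_insert ha] at h
    rcases isUnit_or_isUnit_of_isUnit_add' h with h1 | h1
    · exact ⟨a, Finset.mem_insert_self a s, h1⟩
    · obtain ⟨i, hi, hiu⟩ := ih h1
      exact ⟨i, Finset.mem_insert_of_mem hi, hiu⟩

end Aux

section Statement

variable (C : Type u) [Category.{v} C] [Preadditive C] [MonoidalCategory C]
  [MonoidalPreadditive C] [HasFiniteBiproducts C]

/-- **Lemma.** Let `C` be a right rigid Krull-Schmidt monoidal category, `Z` an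
indecomposable object with `C(𝟙,Z) ≠ 0` and `X` indecomposable.  If `co_X : 𝟙 → X^∨ ⊗ X`
factors as `𝟙 → Z^{⊕k} → X^∨ ⊗ X` for some `k > 0`, then `X` is a direct summand of
`X ⊗ Z`. -/
theorem coev_factoring_summand
    (hrigid : ∀ X : C, Nonempty (RightDual X)) (hKS : IsKrullSchmidt C)
    {X Z : C} (DX : RightDual X) (hXind : Indecomposable X)
    (hZind : Indecomposable Z) (hZB : ∃ φ : 𝟙_ C ⟶ Z, φ ≠ 0)
    (k : ℕ) (hk : 0 < k)
    (u : 𝟙_ C ⟶ ⨁ (fun _ : Fin k => Z)) (v : (⨁ (fun _ : Fin k => Z)) ⟶ DX.dual ⊗ X)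
    (hfac : DX.coev = u ≫ v) :
    IsDirectSummand X (X ⊗ Z) := by
  classical
  set f : Fin k → (X ⟶ X ⊗ Z) :=
    fun i => (ρ_ X).inv ≫ (X ◁ (u ≫ biproduct.π (fun _ : Fin k => Z) i)) with hf
  set g : Fin k → (X ⊗ Z ⟶ X) :=
    fun i => (X ◁ (biproduct.ι (fun _ : Fin k => Z) i ≫ v)) ≫ (α_ X DX.dual X).inv ≫
      (DX.ev ▷ X) ≫ (λ_ X).hom with hg
  have hsum : (∑ i, f i ≫ g i) = 𝟙 X := by
    have : (∑ i, f i ≫ g i) = (ρ_ X).inv ≫ (X ◁ DX.coev) ≫ (α_ X DX.dual X).inv ≫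
        (DX.ev ▷ X) ≫ (λ_ X).hom := by
      rw [hfac]
      have hu : u ≫ v = ∑ i, (u ≫ biproduct.π (fun _ : Fin k => Z) i) ≫
          (biproduct.ι (fun _ : Fin k => Z) i ≫ v) := by
        calc u ≫ v = u ≫ (∑ j, biproduct.π (fun _ : Fin k => Z) j ≫
            biproduct.ι (fun _ : Fin k => Z) j) ≫ v := by rw [biproduct.total]; simp
          _ = _ := by
            rw [Preadditive.sum_comp, Preadditive.comp_sum]
            simp [Category.assoc]
      rw [hu, whiskerLeft_sum]
      simp only [Preadditive.sum_comp, Preadditive.comp_sum]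
      refine Finset.sum_congr rfl fun i _ => ?_
      simp [hf, hg, MonoidalCategory.whiskerLeft_comp]
    rw [this, DX.zigzag₁]
  haveI : IsLocalRing (End X) := hKS.local_end X hXind
  let e : Fin k → End X := fun i => f i ≫ g i
  have hsum1 : IsUnit (∑ i ∈ Finset.univ, e i) := by
    have h1 : (∑ i ∈ Finset.univ, e i) = (1 : End X) := hsum
    rw [h1]
    exact isUnit_one
  obtain ⟨i, _, hi⟩ := exists_isUnit_of_isUnit_sum Finset.univ e hsum1
  obtain ⟨w, hw⟩ := hi
  refine ⟨f i, g i ≫ (↑w⁻¹ : End X), ?_⟩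
  have h2 : (f i ≫ g i) ≫ (↑w⁻¹ : End X) = 𝟙 X := by
    have h3 : (f i ≫ g i) = (↑w : End X) := hw.symm
    rw [h3, ← End.mul_def, w.inv_mul]; rfl
  rw [← Category.assoc, h2]

end Statement

end TIP
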